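/- For arbitrary strata S, T of the stratification A_2 of S^2 (two points, two half-equators, two hemispheres), and every q > 0, one has Ext^q(I_S, I_T) = 0 in the category of representations of the associated quiver with relations (equivalently, in weakly constructible sheaves), where I_S corresponds to the extension by zero of the constant sheaf on the closure of S. -/

import Mathlib

open CategoryTheory CategoryTheory.Limits

/-- The vertices of the quiver of the stratification `A₂` of the 2-sphere: two hemispheres
`H₁, H₂`, two half-equators `E₁, E₂`, two points `P₁, P₂`. -/
inductive V2 : Type
  | H1 | H2 | E1 | E2 | P1 | P2
  deriving DecidableEq

namespace V2

/-- dimension-like rank: points < equator arcs < hemispheres. -/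
def rank : V2 → ℕ
  | H1 | H2 => 2
  | E1 | E2 => 1
  | P1 | P2 => 0

/-- In `A₂` there is an arrow `a → b` (i.e. `a ⊂ closure b`) iff `a = b` or `rank a < rank b`;
identifying all parallel paths, the category of representations of the quiver with relations
is the category of functors on this preorder. -/
instance : Preorder V2 where
  le a b := a = b ∨ rank a < rank b
  le_refl a := Or.inl rfl
  le_trans a b c hab hbc := by
    rcases hab with rfl | hab
    · exact hbc
    · rcases hbc with rfl | hbc
      · exact Or.inr hab
      · exact Or.inr (hab.trans hbc)

instance : DecidableRel (α := V2) (· ≤ ·) := fun a b =>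
  inferInstanceAs (Decidable (_ ∨ _))

end V2

variable (R : Type) [CommRing R]

/-- The category of representations of the quiver with relations of `A₂`
(= functors from the preorder `V2` to `R`-modules). -/
abbrev Rep2 := V2 ⥤ ModuleCat.{0} R

/-- The representation `I_v`: the extension by zero of the constant representation on the
closure of the stratum `v`; it has stalk `R` at every vertex `x ≤ v` (identity arrows
among those) and `0` elsewhere. -/
def IRep (v : V2) : Rep2 R where
  obj x := ModuleCat.of R (PLift (x ≤ v) → R)
  map {x y} f := ModuleCat.ofHom
    { toFun := fun g h => g ⟨(leOfHom f).trans h.down⟩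
      map_add' := fun _ _ => rfl
      map_smul' := fun _ _ => rfl }

/-- The constant representation `C` (stalk `R` everywhere, identity arrows). -/
def CRep : Rep2 R := (Functor.const V2).obj (ModuleCat.of R R)

/-- The canonical generator of `Hom(I_v, I_w)` for `w ≤ v` (identity on the common stalks,
zero elsewhere). -/
def canMor {v w : V2} (h : w ≤ v) : IRep R v ⟶ IRep R w where
  app x := ModuleCat.ofHom
    { toFun := fun g hw => g ⟨hw.down.trans h⟩
      map_add' := fun _ _ => rfl
      map_smul' := fun _ _ => rfl }

/-- The canonical (adjunction) morphism `C ⟶ I_v`. -/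
def unitMor (v : V2) : CRep R ⟶ IRep R v where
  app x := ModuleCat.ofHom
    { toFun := fun r _ => r
      map_add' := fun _ _ => rfl
      map_smul' := fun _ _ => rfl }


section BFunctor

variable (R : Type) [CommRing R]

/-- The functor `M ↦ (PLift p → M)`. -/
@[simps]
def BFun (p : Prop) : ModuleCat.{0} R ⥤ ModuleCat.{0} R where
  obj M := ModuleCat.of R (PLift p → M)
  map f := ModuleCat.ofHom (f.hom.compLeft (PLift p))

instance (p : Prop) : (BFun R p).Additive where
  map_add := by intros; ext; rfl

variable {R} in
/-- constant functions, as a linear map. -/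
def constLM (p : Prop) (M : ModuleCat.{0} R) : M →ₗ[R] (PLift p → M) :=
  LinearMap.pi (fun _ => LinearMap.id)

/-- `BFun R p` is self-adjoint (`PLift p` is a subsingleton, so the power is also a copower). -/
def BAdj (p : Prop) [Decidable p] : BFun R p ⊣ BFun R p :=
  Adjunction.mkOfHomEquiv
    { homEquiv := fun M N =>
        { toFun := fun f => ModuleCat.ofHom
            (LinearMap.pi (fun _ : PLift p => f.hom ∘ₗ constLM p M))
          invFun := fun g =>
            if hp : p then ModuleCat.ofHom
              ((LinearMap.proj (R := R) (φ := fun _ : PLift p => N) ⟨hp⟩) ∘ₗ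
                g.hom ∘ₗ
                (LinearMap.proj (R := R) (φ := fun _ : PLift p => M) ⟨hp⟩))
            else 0
          left_inv := fun f => by
            by_cases hp : p
            · simp only [dif_pos hp]
              ext m
              erw [dif_pos hp]
              show f.hom (fun _ => m ⟨hp⟩) = f.hom m
              have hm : (fun _ : PLift p => m ⟨hp⟩) = m :=
                funext fun s => congrArg m (Subsingleton.elim _ _)
              rw [hm]
            · simp only [dif_neg hp]
              ext m
              erw [dif_neg hp]
              show (0 : (PLift p → M) →ₗ[R] N) m = f.hom m
              have hm : m = 0 := by funext s; exact absurd s.down hp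
              rw [hm]
              exact (LinearMap.zero_apply _).trans (map_zero f.hom).symm
          right_inv := fun g => by
            by_cases hp : p
            · simp only [dif_pos hp]
              ext m h
              erw [dif_pos hp]
              show g.hom m ⟨hp⟩ = g.hom m h
              exact congrArg (g m) (Subsingleton.elim _ _)
            · simp only [dif_neg hp]
              ext m h
              exact absurd h.down hp }
      homEquiv_naturality_left_symm := by
        intros M' M N f g
        cases ‹Decidable p› <;> ext m <;> rfl
      homEquiv_naturality_right := by
        intros M N N' f g
        ext m
        rfl }

end BFunctor
section Coinduction

variable (R : Type) [CommRing R]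

noncomputable instance (p : Prop) [Decidable p] : PreservesLimitsOfSize.{0,0} (BFun R p) :=
  (BAdj R p).rightAdjoint_preservesLimits

noncomputable instance (p : Prop) [Decidable p] : PreservesColimitsOfSize.{0,0} (BFun R p) :=
  (BAdj R p).leftAdjoint_preservesColimits

noncomputable instance (p : Prop) [Decidable p] : PreservesFiniteLimits (BFun R p) :=
  PreservesLimitsOfSize.preservesFiniteLimits.{0,0} (BFun R p)

noncomputable instance (p : Prop) [Decidable p] : PreservesFiniteColimits (BFun R p) :=
  PreservesColimitsOfSize.preservesFiniteColimits.{0,0} (BFun R p)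

/-- The right adjoint (coinduction) of evaluation at `w`. -/
@[simps]
def GFun (w : V2) : ModuleCat.{0} R ⥤ Rep2 R where
  obj M :=
    { obj := fun x => (BFun R (x ≤ w)).obj M
      map := fun {x y} f => ModuleCat.ofHom
        { toFun := fun g h => g ⟨(leOfHom f).trans h.down⟩
          map_add' := fun _ _ => rfl
          map_smul' := fun _ _ => rfl } }
  map {M N} f :=
    { app := fun x => (BFun R (x ≤ w)).map f
      naturality := fun x y g => by ext m; rfl }

/-- `IRep R w` is the coinduction of `R`. -/
def IRepIsoG (w : V2) : IRep R w ≅ (GFun R w).obj (ModuleCat.of R R) :=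
  NatIso.ofComponents (fun x => Iso.refl _) (by intros; rfl)

/-- The evaluation functor at `w`. -/
abbrev evFun (w : V2) : Rep2 R ⥤ ModuleCat.{0} R := (evaluation V2 (ModuleCat.{0} R)).obj w

/-- Evaluation at `w` is left adjoint to coinduction. -/
def evGAdj (w : V2) : evFun R w ⊣ GFun R w :=
  Adjunction.mkOfHomEquiv
    { homEquiv := fun F M =>
        { toFun := fun t =>
            { app := fun x => ModuleCat.ofHom
                (LinearMap.pi (fun h : PLift (x ≤ w) =>
                  t.hom ∘ₗ (F.map (homOfLE h.down)).hom))
              naturality := fun x y g => by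
                ext a
                funext h
                show t (F.map (homOfLE h.down) (F.map g a)) =
                  t (F.map (homOfLE ((leOfHom g).trans h.down)) a)
                rw [show homOfLE ((leOfHom g).trans h.down) = g ≫ homOfLE h.down from
                  Subsingleton.elim _ _, F.map_comp]
                rfl }
          invFun := fun α => ModuleCat.ofHom
            ((LinearMap.proj (R := R) (φ := fun _ : PLift (w ≤ w) => _) ⟨le_refl w⟩) ∘ₗ
              (α.app w).hom)
          left_inv := fun t => by
            ext a
            show t (F.map (homOfLE (le_refl w)) a) = t a
            rw [show homOfLE (le_refl w) = 𝟙 w from Subsingleton.elim _ _, F.map_id]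
            rfl
          right_inv := fun α => by
            ext x a
            funext h
            show α.app w (F.map (homOfLE h.down) a) ⟨le_refl w⟩ = α.app x a h
            have := congrFun (congrArg (fun (f : F.obj x ⟶ ((GFun R w).obj M).obj w) => (f : F.obj x → _)) (α.naturality (homOfLE h.down))) a
            rw [show α.app w (F.map (homOfLE h.down) a) = (((GFun R w).obj M).map (homOfLE h.down)) (α.app x a) from this]
            show α.app x a ⟨_⟩ = α.app x a h
            exact congrArg (α.app x a) (Subsingleton.elim _ _) }
      homEquiv_naturality_left_symm := by intros; ext; rfl
      homEquiv_naturality_right := by intros; ext; funext; rfl }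

instance (w : V2) : (GFun R w).Additive where
  map_add := by intros; ext; rfl

noncomputable instance (w : V2) : PreservesLimitsOfSize.{0,0} (GFun R w) :=
  (evGAdj R w).rightAdjoint_preservesLimits

noncomputable instance (w : V2) : PreservesFiniteLimits (GFun R w) :=
  PreservesLimitsOfSize.preservesFiniteLimits.{0,0} (GFun R w)

instance (w : V2) (J : Type) [SmallCategory J] : PreservesColimitsOfShape J (GFun R w) :=
  preservesColimitsOfShape_of_evaluation _ _ (fun x =>
    preservesColimitsOfShape_of_natIso (F := BFun R (x ≤ w))
      (NatIso.ofComponents (fun M => Iso.refl _) (by intros; rfl)))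

noncomputable instance (w : V2) : PreservesFiniteColimits (GFun R w) where
  preservesFiniteColimits J _ _ := inferInstance

end Coinduction

section MapComplexAdj

variable {C D : Type*} [Category C] [Category D] [Preadditive C] [Preadditive D]
  {F : C ⥤ D} {G : D ⥤ C} (adj : F ⊣ G) [F.Additive] [G.Additive]
  {ι : Type*} (c : ComplexShape ι)

/-- An adjunction induces an adjunction between the functors on homological complexes. -/
def CategoryTheory.Adjunction.mapHomologicalComplex :
    F.mapHomologicalComplex c ⊣ G.mapHomologicalComplex c :=
  Adjunction.mkOfHomEquiv
    { homEquiv := fun K L =>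
        { toFun := fun u =>
            { f := fun i => adj.homEquiv _ _ (u.f i)
              comm' := fun i j _ => by
                simp only [Functor.mapHomologicalComplex_obj_d]
                exact (adj.homEquiv_naturality_right (u.f i) (L.d i j)).symm.trans ((congrArg (adj.homEquiv _ _) (u.comm i j)).trans (adj.homEquiv_naturality_left (K.d i j) (u.f j))) }
          invFun := fun v =>
            { f := fun i => (adj.homEquiv _ _).symm (v.f i)
              comm' := fun i j _ => by
                simp only [Functor.mapHomologicalComplex_obj_d]
                exact (adj.homEquiv_naturality_right_symm (v.f i) (L.d i j)).symm.trans ((congrArg (adj.homEquiv _ _).symm (v.comm i j)).trans (adj.homEquiv_naturality_left_symm (K.d i j) (v.f j))) }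
          left_inv := fun u => by
            ext i
            exact (adj.homEquiv _ _).left_inv (u.f i)
          right_inv := fun v => by
            ext i
            exact (adj.homEquiv _ _).right_inv (v.f i) }
      homEquiv_naturality_left_symm := by
        intros K K' L f g
        ext i
        exact Adjunction.homEquiv_naturality_left_symm adj (f.f i) (g.f i)
      homEquiv_naturality_right := by
        intros K L L' f g
        ext i
        exact Adjunction.homEquiv_naturality_right adj (f.f i) (g.f i) }

end MapComplexAdj

section Core

variable {C : Type*} [Category C] [Abelian C] [HasDerivedCategory C]

/-- Key vanishing: in the derived category, any morphism from a single complex on a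
projective object to `Q.obj K` with `K` exact in degree `0` vanishes. -/
lemma hom_single_projective_eq_zero (P : C) [Projective P] (K : CochainComplex C ℤ)
    (hK : K.ExactAt 0)
    (φ : DerivedCategory.Q.obj ((HomologicalComplex.single C (ComplexShape.up ℤ) 0).obj P) ⟶
      DerivedCategory.Q.obj K) : φ = 0 := by
  haveI : (HomotopyCategory.quasiIso C (ComplexShape.up ℤ)).HasLeftCalculusOfFractions := by
    rw [HomotopyCategory.quasiIso_eq_subcategoryAcyclic_W]; infer_instance
  let Ps := (HomologicalComplex.single C (ComplexShape.up ℤ) 0).obj P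
  let e := DerivedCategory.quotientCompQhIso C
  let φ' : DerivedCategory.Qh.obj ((HomotopyCategory.quotient C _).obj Ps) ⟶
      DerivedCategory.Qh.obj ((HomotopyCategory.quotient C _).obj K) :=
    e.hom.app Ps ≫ φ ≫ e.inv.app K
  suffices hz : φ' = 0 by
    have h2 : φ = e.inv.app Ps ≫ φ' ≫ e.hom.app K := by
      simp [φ']
      rfl
    rw [h2, hz, zero_comp, comp_zero]
  obtain ⟨fr, hfr⟩ := Localization.exists_leftFraction DerivedCategory.Qh
    (HomotopyCategory.quasiIso C (ComplexShape.up ℤ)) φ'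
  obtain ⟨Z, f, s, hs, rfl⟩ := fr.cases
  rw [hfr]
  -- it suffices to show that `Qh.map f = 0`
  suffices hf : f = 0 by
    have h1 := MorphismProperty.LeftFraction.map_comp_map_s (MorphismProperty.LeftFraction.mk f s hs)
      DerivedCategory.Qh (Localization.inverts DerivedCategory.Qh (HomotopyCategory.quasiIso C (ComplexShape.up ℤ)))
    haveI := Localization.inverts DerivedCategory.Qh
      (HomotopyCategory.quasiIso C (ComplexShape.up ℤ)) s hs
    rw [← cancel_mono (DerivedCategory.Qh.map s), h1, zero_comp, hf, Functor.map_zero]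
  -- lift `f` and `s` to the category of complexes
  obtain ⟨g, rfl⟩ := (HomotopyCategory.quotient C (ComplexShape.up ℤ)).map_surjective f
  obtain ⟨t, rfl⟩ := (HomotopyCategory.quotient C (ComplexShape.up ℤ)).map_surjective s
  replace hs := (HomotopyCategory.quotient_map_mem_quasiIso_iff t).1 hs
  -- `Z.as` is exact at 0
  have hZ : Z.as.ExactAt 0 := by
    rw [HomologicalComplex.exactAt_iff_isZero_homology] at hK ⊢
    haveI : QuasiIsoAt t 0 := hs.quasiIsoAt 0
    exact hK.of_iso (asIso (HomologicalComplex.homologyMap t 0)).symm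
  -- construct a nullhomotopy of `g`
  rw [Z.as.exactAt_iff' (-1) 0 1 (by rw [CochainComplex.prev]; norm_num)
    (by rw [CochainComplex.next]; norm_num)] at hZ
  haveI : Projective (Ps.X 0) :=
    Projective.of_iso (HomologicalComplex.singleObjXSelf (ComplexShape.up ℤ) 0 P).symm inferInstance
  have hu : g.f 0 ≫ Z.as.d 0 1 = 0 := by
    rw [g.comm 0 1]
    have : Ps.d 0 1 = 0 := by
      apply (HomologicalComplex.isZero_single_obj_X (ComplexShape.up ℤ) 0 P 1 (by omega)).eq_of_tgt
    rw [this, zero_comp]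
  obtain h0 : {h : Ps.X 0 ⟶ Z.as.X (-1) // h ≫ Z.as.d (-1) 0 = g.f 0} :=
    ⟨hZ.liftFromProjective (g.f 0) hu, hZ.liftFromProjective_comp (g.f 0) hu⟩
  have hg : Homotopy g 0 := {
    hom := fun i j =>
      if hij : i = 0 ∧ j = -1 then
        eqToHom (congrArg Ps.X hij.1) ≫ h0.1 ≫ eqToHom (congrArg Z.as.X hij.2.symm)
      else 0
    zero := fun i j hij => by
      rw [dif_neg]
      rintro ⟨rfl, rfl⟩
      exact hij (by simp)
    comm := fun i => by
      by_cases hi : i = 0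
      · subst hi
        have hd : dNext 0 (fun i j => if hij : i = 0 ∧ j = -1 then
            eqToHom (congrArg Ps.X hij.1) ≫ h0.1 ≫ eqToHom (congrArg Z.as.X hij.2.symm)
            else 0) = 0 := by
          rw [dNext_eq _ (show (ComplexShape.up ℤ).Rel 0 1 by simp)]
          rw [dif_neg (by rintro ⟨h1, -⟩; omega), comp_zero]
        have hp : prevD 0 (fun i j => if hij : i = 0 ∧ j = -1 then
            eqToHom (congrArg Ps.X hij.1) ≫ h0.1 ≫ eqToHom (congrArg Z.as.X hij.2.symm)
            else 0) = g.f 0 := by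
          rw [prevD_eq _ (show (ComplexShape.up ℤ).Rel (-1) 0 by simp)]
          rw [dif_pos ⟨rfl, rfl⟩]
          simpa using h0.2
        rw [hd, hp]
        simp
      · apply (HomologicalComplex.isZero_single_obj_X (ComplexShape.up ℤ) 0 P i hi).eq_of_src }
  rw [HomotopyCategory.eq_of_homotopy g 0 hg, Functor.map_zero]
  rfl

end Core
section CoreB

variable (C : Type*) [Category C] [Abelian C] [HasDerivedCategory C]

/-- The single functor to the derived category is `Q` composed with the single complex functor. -/
noncomputable def singleQIso (X : C) :
    (DerivedCategory.singleFunctor C 0).obj X ≅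
      DerivedCategory.Q.obj ((HomologicalComplex.single C (ComplexShape.up ℤ) 0).obj X) :=
  ((SingleFunctors.evaluation _ _ 0).mapIso (DerivedCategory.singleFunctorsPostcompQIso C)).app X

variable {C}


lemma subsingleton_single_hom_shift (P Y : C) [Projective P] (n : ℤ) (hn : n ≠ 0) :
    Subsingleton ((DerivedCategory.singleFunctor C 0).obj P ⟶
      (((DerivedCategory.singleFunctor C 0).obj Y)⟦n⟧)) := by
  let e1 := singleQIso C P
  let e2 : (((DerivedCategory.singleFunctor C 0).obj Y)⟦n⟧) ≅
      DerivedCategory.Q.obj (((HomologicalComplex.single C (ComplexShape.up ℤ) 0).obj Y)⟦n⟧) :=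
    (shiftFunctor _ n).mapIso (singleQIso C Y) ≪≫
      ((DerivedCategory.Q.commShiftIso n).app _).symm
  have hexact : (((HomologicalComplex.single C (ComplexShape.up ℤ) 0).obj Y)⟦n⟧).ExactAt 0 := by
    rw [HomologicalComplex.exactAt_iff]
    apply ShortComplex.exact_of_isZero_X₂
    exact HomologicalComplex.isZero_single_obj_X (ComplexShape.up ℤ) 0 Y (0 + n) (by omega)
  refine Subsingleton.intro fun a b => ?_
  have ha : a = e1.hom ≫ (e1.inv ≫ a ≫ e2.hom) ≫ e2.inv := by
    rw [Category.assoc, Category.assoc, Iso.hom_inv_id, Category.comp_id, Iso.hom_inv_id_assoc]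
  have hb : b = e1.hom ≫ (e1.inv ≫ b ≫ e2.hom) ≫ e2.inv := by
    rw [Category.assoc, Category.assoc, Iso.hom_inv_id, Category.comp_id, Iso.hom_inv_id_assoc]
  rw [ha, hb, hom_single_projective_eq_zero P _ hexact (e1.inv ≫ a ≫ e2.hom),
    hom_single_projective_eq_zero P _ hexact (e1.inv ≫ b ≫ e2.hom)]

end CoreB

section MapSingle

variable {A : Type*} {B : Type*} [Category A] [Category B] [Abelian A] [Abelian B]
  [HasDerivedCategory A] [HasDerivedCategory B]
  (H : A ⥤ B) [H.Additive] [PreservesFiniteLimits H] [PreservesFiniteColimits H]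

/-- The derived functor of an exact functor commutes with the single functors. -/
noncomputable def mapDCSingleIso (X : A) :
    H.mapDerivedCategory.obj ((DerivedCategory.singleFunctor A 0).obj X) ≅
      (DerivedCategory.singleFunctor B 0).obj (H.obj X) :=
  H.mapDerivedCategory.mapIso (singleQIso A X) ≪≫
    H.mapDerivedCategoryFactors.app _ ≪≫
    DerivedCategory.Q.mapIso
      ((HomologicalComplex.singleMapHomologicalComplex H (ComplexShape.up ℤ) 0).app X) ≪≫
    (singleQIso B (H.obj X)).symm

end MapSingle

/-- For arbitrary strata `S, T` of the stratification `A₂` of `S²`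
(two points, two half-equators, two hemispheres) and every `q > 0`, one has
`Ext^q (I_S, I_T) = 0` in the category of representations of the associated quiver with
relations (equivalently, in weakly constructible sheaves), where `I_S` corresponds to the
extension by zero of the constant sheaf on the closure of `S`. -/
theorem formality_spheres_stmt14 (R : Type) [CommRing R] [IsDomain R]
    [IsPrincipalIdealRing R] [CategoryTheory.HasExt.{0} (Rep2 R)] :
    ∀ (v w : V2) (q : ℕ), 0 < q →
      Subsingleton (CategoryTheory.Abelian.Ext (IRep R v) (IRep R w) q) := by
  intro v w q hq
  letI : HasDerivedCategory (Rep2 R) := HasDerivedCategory.standard _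
  letI : HasDerivedCategory (ModuleCat.{0} R) := HasDerivedCategory.standard _
  -- the derived adjunction between evaluation at `w` and coinduction
  letI : CatCommSq ((evFun R w).mapHomologicalComplex (ComplexShape.up ℤ))
      DerivedCategory.Q DerivedCategory.Q (evFun R w).mapDerivedCategory :=
    ⟨(Functor.mapDerivedCategoryFactors _).symm⟩
  letI : CatCommSq ((GFun R w).mapHomologicalComplex (ComplexShape.up ℤ))
      DerivedCategory.Q DerivedCategory.Q (GFun R w).mapDerivedCategory :=
    ⟨(Functor.mapDerivedCategoryFactors _).symm⟩
  let adjD : (evFun R w).mapDerivedCategory ⊣ (GFun R w).mapDerivedCategory :=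
    ((evGAdj R w).mapHomologicalComplex (ComplexShape.up ℤ)).localization
      DerivedCategory.Q (HomologicalComplex.quasiIso (Rep2 R) (ComplexShape.up ℤ))
      DerivedCategory.Q (HomologicalComplex.quasiIso (ModuleCat.{0} R) (ComplexShape.up ℤ))
      (evFun R w).mapDerivedCategory (GFun R w).mapDerivedCategory
  -- the stalk of `IRep R v` at `w`, a free module
  let Mv : ModuleCat.{0} R := (IRep R v).obj w
  haveI : Projective Mv :=
    ModuleCat.projective_of_free (Pi.basisFun R (PLift (w ≤ v)))
  -- target of the adjunction
  let Z : DerivedCategory (ModuleCat.{0} R) :=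
    (((DerivedCategory.singleFunctor (ModuleCat.{0} R) 0).obj (ModuleCat.of R R))⟦(q : ℤ)⟧)
  -- `B ≅ GwD.obj Z`
  let isoB : (((DerivedCategory.singleFunctor (Rep2 R) 0).obj (IRep R w))⟦(q : ℤ)⟧) ≅
      (GFun R w).mapDerivedCategory.obj Z :=
    (shiftFunctor _ (q : ℤ)).mapIso
      ((DerivedCategory.singleFunctor (Rep2 R) 0).mapIso (IRepIsoG R w) ≪≫
        (mapDCSingleIso (GFun R w) (ModuleCat.of R R)).symm) ≪≫
      (((GFun R w).mapDerivedCategory.commShiftIso (q : ℤ)).app _).symm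
  -- `evD.obj A ≅ singleD Mv`
  let isoA : (evFun R w).mapDerivedCategory.obj
      ((DerivedCategory.singleFunctor (Rep2 R) 0).obj (IRep R v)) ≅
      (DerivedCategory.singleFunctor (ModuleCat.{0} R) 0).obj Mv :=
    mapDCSingleIso (evFun R w) (IRep R v)
  haveI hsub : Subsingleton ((DerivedCategory.singleFunctor (ModuleCat.{0} R) 0).obj Mv ⟶ Z) :=
    subsingleton_single_hom_shift Mv (ModuleCat.of R R) (q : ℤ) (by omega)
  haveI : Subsingleton ((DerivedCategory.singleFunctor (Rep2 R) 0).obj (IRep R v) ⟶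
      (((DerivedCategory.singleFunctor (Rep2 R) 0).obj (IRep R w))⟦(q : ℤ)⟧)) := by
    refine Equiv.subsingleton (((Iso.refl _).homCongr isoB).trans
      ((adjD.homEquiv _ _).symm.trans ((isoA.homCongr (Iso.refl Z)))))
  exact @Equiv.subsingleton _ _ Abelian.Ext.homEquiv this
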